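/- arXiv:math/9805001 — 2 statements merged into one kernel-verified Lean document; each statement's English description precedes it below -/
import Mathlib

section
/- Let h be a real number with h ≠ −k/2 for every integer k ≥ 0. Then for every integer n ≥ −1 and every polynomial f ∈ ℂ[X], the q_R-conformal symmetries satisfy the commutation relation [L_n, f(D)] = −D^{n+1}∘f'(D) on ℂ[z], where f(D) denotes the operator obtained by substituting D into f (equivalently, [L_n, D^k] = −k·D^{n+k} for all k ≥ 0). -/
open Polynomial

noncomputable section

/-- Operators (ℂ-linear endomorphisms) on ℂ[z], realized as `Polynomial ℂ`. -/
abbrev E : Type := Module.End ℂ (Polynomial ℂ)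

/-- The differentiation operator `D(p) = p'`. -/
def Dop : E := Polynomial.derivative

/-- Multiplication by `z`. -/
def Mz : E := LinearMap.mulLeft ℂ (X : Polynomial ℂ)

/-- `l₋₁(p) = z·p`. -/
def lm1 : E := Mz

/-- `l₀(p) = z·p' + h·p`. -/
def l0 (h : ℝ) : E := Mz * Dop + (h : ℂ) • (1 : E)

/-- `l₁(p) = z·p'' + 2h·p'`. -/
def l1 (h : ℝ) : E := Mz * Dop ^ 2 + ((2 * h : ℝ) : ℂ) • Dop

/-- Commutator `[A,B] = A∘B − B∘A`. -/
def opComm (A B : E) : E := A * B - B * A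

lemma hDM : Dop * Mz = Mz * Dop + 1 := by
  apply LinearMap.ext
  intro p
  simp [Dop, Mz, Module.End.mul_apply, LinearMap.mulLeft_apply, derivative_mul, mul_comm]

/-- If `[A, Dop] = -(Dop ^ m)`, then the commutation relation holds for powers of `Dop`. -/
lemma comm_pow (A : E) (m : ℕ) (hA : A * Dop - Dop * A = -(Dop ^ m)) :
    ∀ k : ℕ, A * Dop ^ (k + 1) - Dop ^ (k + 1) * A =
      -((((k : ℂ) + 1)) • (Dop ^ m * Dop ^ k)) := by
  intro k
  induction k with
  | zero => simpa using hA
  | succ k ih =>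
    have key : A * Dop ^ (k + 2) - Dop ^ (k + 2) * A =
        (A * Dop ^ (k + 1) - Dop ^ (k + 1) * A) * Dop + Dop ^ (k + 1) * (A * Dop - Dop * A) := by
      have h1 : A * Dop ^ (k + 2) = A * Dop ^ (k + 1) * Dop := by
        rw [mul_assoc, ← pow_succ]
      have h2 : Dop ^ (k + 2) * A = Dop ^ (k + 1) * (Dop * A) := by
        rw [← mul_assoc, ← pow_succ]
      rw [h1, h2, sub_mul, mul_sub]
      simp only [← mul_assoc]
      abel
    have hc : Dop ^ (k + 1) * Dop ^ m = Dop ^ m * Dop ^ (k + 1) := by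
      rw [← pow_add, ← pow_add, add_comm]
    rw [key, ih, hA, _root_.mul_neg (Dop ^ (k + 1)) (Dop ^ m), hc]
    have h3 : -(((k : ℂ) + 1) • (Dop ^ m * Dop ^ k)) * Dop =
        -(((k : ℂ) + 1) • (Dop ^ m * Dop ^ (k + 1))) := by
      rw [_root_.neg_mul (((k : ℂ) + 1) • (Dop ^ m * Dop ^ k)) Dop, smul_mul_assoc, mul_assoc, ← pow_succ]
    rw [h3, ← neg_add]
    push_cast
    module

lemma comm_aeval (A : E) (m : ℕ) (hA : A * Dop - Dop * A = -(Dop ^ m)) :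
    ∀ f : Polynomial ℂ,
      A * Polynomial.aeval Dop f - Polynomial.aeval Dop f * A =
        -(Dop ^ m * Polynomial.aeval Dop (derivative f)) := by
  intro f
  induction f using Polynomial.induction_on with
  | C a =>
    simp [Algebra.commutes]
  | add p q hp hq =>
    rw [derivative_add, map_add, map_add, mul_add, add_mul, add_sub_add_comm, hp, hq, mul_add,
      neg_add]
  | monomial n a _ =>
    have hd : derivative (C a * X ^ (n + 1)) = C (a * ((n : ℂ) + 1)) * X ^ n := by
      rw [derivative_C_mul, derivative_X_pow, C_mul]
      push_cast
      ring
    rw [hd]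
    have e1 : (Polynomial.aeval Dop) (C a * X ^ (n + 1)) = a • Dop ^ (n + 1) := by
      simp [Algebra.smul_def]
    have e2 : (Polynomial.aeval Dop) (C (a * ((n : ℂ) + 1)) * X ^ n) =
        (a * ((n : ℂ) + 1)) • Dop ^ n := by
      simp [Algebra.smul_def]
    rw [e1, e2]
    have hs : A * (a • Dop ^ (n + 1)) - (a • Dop ^ (n + 1)) * A =
        a • (A * Dop ^ (n + 1) - Dop ^ (n + 1) * A) := by
      rw [smul_sub, mul_smul_comm, smul_mul_assoc]
    rw [hs, comm_pow A m hA n, smul_neg, smul_smul, mul_smul_comm]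

/-- The weight `w h n = n!·(2h)(2h+1)⋯(2h+n−1)`, i.e. the squared norm `⟨zⁿ, zⁿ⟩`
in the unitarizable Verma module. -/
def w (h : ℝ) (n : ℕ) : ℝ := (n.factorial : ℝ) * ∏ i ∈ Finset.range n, (2 * h + (i : ℝ))

/-- For nondegenerate extremal weight `h`, for every `n ≥ −1` (written
`n = m − 1`, `m ∈ ℕ`) and every polynomial `f`, `[Lₙ, f(D)] = −D^{n+1}∘f'(D)`. -/
theorem stmt_9 (h : ℝ) (hh : ∀ k : ℕ, h ≠ -(k : ℝ) / 2)
    (L : ℤ → E)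
    (hLpos : ∀ k : ℕ, L (k : ℤ) = Mz * Dop ^ (k + 1) + (((k : ℂ) + 1) * (h : ℂ)) • Dop ^ k)
    (hLneg : ∀ k : ℕ, 1 ≤ k → ∀ n : ℕ,
      L (-(k : ℤ)) (X ^ n) =
        (((n : ℂ) + ((k : ℂ) + 1) * (h : ℂ)) /
            ∏ i ∈ Finset.range k, ((n : ℂ) + 2 * h + (i : ℂ))) • X ^ (n + k))
    :
    ∀ m : ℕ, ∀ f : Polynomial ℂ,
      opComm (L ((m : ℤ) - 1)) (Polynomial.aeval Dop f) =
        -(Dop ^ m * Polynomial.aeval Dop (derivative f)) := by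
  have hDMz := hDM
  -- the value of L(-1) on monomials
  have hmono : ∀ n : ℕ, L (-1 : ℤ) ((X : Polynomial ℂ) ^ n) = X ^ (n + 1) := by
    intro n
    have hne : ((n : ℂ)) + 2 * (h : ℂ) ≠ 0 := by
      intro hcon
      apply hh n
      have h2 : ((n : ℕ) : ℝ) + 2 * h = 0 := by exact_mod_cast hcon
      push_cast at h2 ⊢
      linarith
    have hk := hLneg 1 le_rfl n
    simp only [Nat.cast_one, Finset.prod_range_one, Nat.cast_zero, add_zero] at hk
    rw [hk, show ((n : ℂ) + ((1 : ℂ) + 1) * (h : ℂ)) = ((n : ℂ) + 2 * h) by ring,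
      div_self hne, one_smul]
  have hLm1 : L (-1 : ℤ) = Mz := by
    apply LinearMap.ext
    intro p
    induction p using Polynomial.induction_on with
    | C a =>
      have h0 : (C a : Polynomial ℂ) = a • ((X : Polynomial ℂ) ^ 0) := by
        simp [Polynomial.smul_eq_C_mul]
      rw [h0, map_smul, hmono 0, map_smul]
      simp [Mz, Polynomial.smul_eq_C_mul]
    | add p q hp hq => rw [map_add, hp, hq, map_add]
    | monomial n a _ =>
      have hrw : C a * (X : Polynomial ℂ) ^ (n + 1) = a • (X ^ (n + 1)) := by
        simp [Polynomial.smul_eq_C_mul]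
      rw [hrw, map_smul, hmono (n + 1), map_smul]
      simp only [Mz, LinearMap.mulLeft_apply]
      rw [Polynomial.smul_eq_C_mul, Polynomial.smul_eq_C_mul]
      ring
  intro m f
  cases m with
  | zero =>
    have hz : (((0 : ℕ) : ℤ) - 1) = (-1 : ℤ) := by norm_num
    rw [hz, hLm1]
    have hA : Mz * Dop - Dop * Mz = -(Dop ^ 0) := by
      rw [hDMz, pow_zero]
      abel
    exact comm_aeval Mz 0 hA f
  | succ k =>
    have hm : ((k + 1 : ℕ) : ℤ) - 1 = (k : ℤ) := by push_cast; ring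
    rw [hm, hLpos k]
    set c : ℂ := ((k : ℂ) + 1) * (h : ℂ) with hc
    set A : E := Mz * Dop ^ (k + 1) + c • Dop ^ k with hAdef
    have e1 : A * Dop = Mz * Dop ^ (k + 2) + c • Dop ^ (k + 1) := by
      rw [hAdef, add_mul, mul_assoc, ← pow_succ, smul_mul_assoc, ← pow_succ]
    have e2 : Dop * A = Mz * Dop ^ (k + 2) + Dop ^ (k + 1) + c • Dop ^ (k + 1) := by
      rw [hAdef, mul_add, mul_smul_comm, ← pow_succ', ← mul_assoc, hDMz, add_mul, one_mul,
        mul_assoc, ← pow_succ']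
    have hA : A * Dop - Dop * A = -(Dop ^ (k + 1)) := by
      rw [e1, e2]
      abel
    exact comm_aeval A (k + 1) hA f

end
end

section
/- Let h be a real number with h ≠ −k/2 for every integer k ≥ 0. Then the operators J_m form a family of spin-1 tensor operators for 𝔰𝔩(2,ℂ): [l_i, J_m] = −m·J_{m+i} on ℂ[z] for every i ∈ {−1, 0, 1} and every m ∈ ℤ. -/
open Polynomial

noncomputable section

lemma ext_basis {A B : E} (hAB : ∀ n : ℕ, A (X ^ n) = B (X ^ n)) : A = B := by
  refine LinearMap.ext fun p => ?_
  induction p using Polynomial.induction_on' with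
  | add p q hp hq => simp [map_add, hp, hq]
  | monomial n a =>
      rw [← smul_X_eq_monomial, map_smul, map_smul, hAB]

@[simp] lemma Mz_apply (p : Polynomial ℂ) : Mz p = X * p := rfl
@[simp] lemma Dop_apply (p : Polynomial ℂ) : Dop p = derivative p := rfl

lemma Dop_pow (n : ℕ) : Dop ((X:ℂ[X]) ^ (n+1)) = ((n:ℂ)+1) • X ^ n := by
  simp [derivative_X_pow, smul_eq_C_mul]

lemma comm_lm1_D : opComm lm1 Dop = -1 := by
  apply ext_basis
  intro n
  cases n with
  | zero => simp [opComm, lm1, Module.End.mul_apply]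
  | succ n => simp [opComm, lm1, Module.End.mul_apply, Dop_pow]

lemma comm_l0_D (h : ℝ) : opComm (l0 h) Dop = -Dop := by
  have : opComm (l0 h) Dop = Mz * (Dop * Dop) - Dop * (Mz * Dop) := by
    simp only [opComm, l0]
    noncomm_ring
  rw [this]
  apply ext_basis
  intro n
  cases n with
  | zero => simp [Module.End.mul_apply]
  | succ n =>
      cases n with
      | zero => simp [Module.End.mul_apply]
      | succ k =>
          simp [Module.End.mul_apply, Dop_pow, smul_smul, pow_succ, smul_eq_C_mul]

lemma comm_l1_D (h : ℝ) : opComm (l1 h) Dop = -(Dop^2) := by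
  have : opComm (l1 h) Dop = Mz * (Dop^2 * Dop) - Dop * (Mz * Dop^2) := by
    simp only [opComm, l1]
    noncomm_ring
  rw [this]
  apply ext_basis
  intro n
  match n with
  | 0 => simp [Module.End.mul_apply, pow_succ]
  | 1 => simp [Module.End.mul_apply, pow_succ]
  | 2 => simp [Module.End.mul_apply, pow_succ, Dop_pow]
  | (k+3) =>
      simp [Module.End.mul_apply, Dop_pow, smul_smul, pow_succ, smul_eq_C_mul]

lemma comm_pow_s11 (A B C : E) (hC : opComm A B = C) (hcomm : B * C = C * B) :
    ∀ m : ℕ, opComm A (B ^ (m+1)) = ((m+1 : ℕ) : ℂ) • (B ^ m * C) := by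
  intro m
  induction m with
  | zero => simpa using hC
  | succ k ih =>
      have leib : opComm A (B^(k+1) * B) = opComm A (B^(k+1)) * B + B^(k+1) * opComm A B := by
        simp only [opComm, sub_mul, mul_sub, mul_assoc]
        abel
      rw [pow_succ, leib, ih, hC]
      have hBC : B^k * C * B = B^(k+1) * C := by
        rw [mul_assoc, ← hcomm, ← mul_assoc, ← pow_succ]
      rw [smul_mul_assoc, hBC]
      have : ((k+1+1:ℕ):ℂ) = ((k+1:ℕ):ℂ) + 1 := by push_cast; ring
      rw [this, add_smul, one_smul]

lemma E_mul_neg_one (a : E) : a * -1 = -a := mul_neg_one a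
lemma E_neg_one_mul (a : E) : -1 * a = -a := neg_one_mul a
lemma E_neg_mul (a b : E) : -a * b = -(a*b) := neg_mul a b
lemma E_pow_succ' (a : E) (n : ℕ) : a * a^n = a^(n+1) := (pow_succ' a n).symm
lemma E_mul_neg (a b : E) : a * -b = -(a*b) := mul_neg a b
lemma E_mul_one (a : E) : a * 1 = a := mul_one a
lemma E_pow_succ (a : E) (n : ℕ) : a^n * a = a^(n+1) := (pow_succ a n).symm
lemma E_pow_add (a : E) (m n : ℕ) : a^m * a^n = a^(m+n) := (pow_add a m n).symm

/-- For nondegenerate extremal weight `h`, the operators `Jₘ`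
(`J₀ = id`, `Jₘ = D^m`, `J₋ₘ = F^m` for `m ≥ 1`) form a family of spin-1 tensor operators:
`[lᵢ, Jₘ] = −m·J_{m+i}` for `i ∈ {−1,0,1}` and all `m ∈ ℤ`. -/
theorem stmt_11 (h : ℝ) (hh : ∀ k : ℕ, h ≠ -(k : ℝ) / 2)
    (F : E) (hF : ∀ n : ℕ, F (X ^ n) = (((n : ℂ) + 2 * h)⁻¹) • X ^ (n + 1))
    (J : ℤ → E)
    (hJ0 : J 0 = 1)
    (hJpos : ∀ m : ℕ, 1 ≤ m → J (m : ℤ) = Dop ^ m)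
    (hJneg : ∀ m : ℕ, 1 ≤ m → J (-(m : ℤ)) = F ^ m) :
    ∀ m : ℤ,
      opComm lm1 (J m) = ((-m : ℤ) : ℂ) • J (m + -1) ∧
      opComm (l0 h) (J m) = ((-m : ℤ) : ℂ) • J m ∧
      opComm (l1 h) (J m) = ((-m : ℤ) : ℂ) • J (m + 1) := by
  -- nondegeneracy
  have hne : ∀ n : ℕ, ((n:ℂ) + 2 * (h:ℂ)) ≠ 0 := by
    intro n hn
    have : (n:ℝ) + 2 * h = 0 := by exact_mod_cast hn
    exact hh n (by linarith)
  have hx : ∀ n : ℕ, lm1 ((X:ℂ[X])^n) = X^(n+1) := by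
    intro n; simp [lm1, ← pow_succ']
  -- base commutators with F
  have comm_lm1_F : opComm lm1 F = F^2 := by
    apply ext_basis
    intro n
    have e1 := hne n
    have e2 := hne (n+1)
    simp only [opComm, LinearMap.sub_apply, Module.End.mul_apply, pow_two, hF, map_smul, hx,
      smul_smul]
    rw [← sub_smul]
    congr 1
    push_cast at e2 ⊢
    field_simp
    try ring
  have hl0 : ∀ k : ℕ, (l0 h) ((X:ℂ[X])^k) = ((k:ℂ) + (h:ℂ)) • X^k := by
    intro k
    match k with
    | 0 => simp [l0, LinearMap.add_apply, Module.End.mul_apply, LinearMap.smul_apply,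
             Module.End.one_apply]
    | k+1 =>
        simp only [l0, LinearMap.add_apply, Module.End.mul_apply, LinearMap.smul_apply,
          Module.End.one_apply, Mz_apply, Dop_pow]
        rw [mul_smul_comm, ← pow_succ', ← add_smul]
        congr 1
        push_cast
        try ring
  have comm_l0_F : opComm (l0 h) F = F := by
    apply ext_basis
    intro n
    have e1 := hne n
    simp only [opComm, LinearMap.sub_apply, Module.End.mul_apply]
    rw [hF n, map_smul, hl0 (n+1), hl0 n, map_smul, hF n, smul_smul, smul_smul, ← sub_smul]
    congr 1
    push_cast
    field_simp
    try ring
  have hl1 : ∀ k : ℕ, (l1 h) ((X:ℂ[X])^(k+1)) = (((k:ℂ)+1) * ((k:ℂ) + 2*(h:ℂ))) • X^k := by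
    intro k
    simp only [l1, LinearMap.add_apply, Module.End.mul_apply, LinearMap.smul_apply,
      pow_two, Mz_apply]
    match k with
    | 0 =>
        simp only [Dop_pow, map_smul, smul_smul, pow_zero, zero_add]
        simp [smul_smul]
        try ring_nf
    | k+1 =>
        rw [Dop_pow (k+1), map_smul, Dop_pow k]
        rw [smul_smul, smul_smul, mul_smul_comm, ← pow_succ', ← add_smul]
        congr 1
        push_cast
        try ring
  have comm_l1_F : opComm (l1 h) F = 1 := by
    apply ext_basis
    intro n
    simp only [opComm, LinearMap.sub_apply, Module.End.mul_apply, Module.End.one_apply]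
    rw [hF n, map_smul, hl1 n]
    match n with
    | 0 =>
        have hz : (l1 h) ((X:ℂ[X])^0) = 0 := by
          simp [l1, LinearMap.add_apply, Module.End.mul_apply, LinearMap.smul_apply, pow_two]
        rw [hz, map_zero, sub_zero, smul_smul]
        have e0 := hne 0
        push_cast at e0 ⊢
        rw [show (((0:ℂ))+1)*((0:ℂ)+2*(h:ℂ)) = ((0:ℂ)+2*(h:ℂ)) by ring,
          inv_mul_cancel₀ e0, one_smul]
    | k+1 =>
        rw [hl1 k, map_smul, hF k]
        rw [smul_smul, smul_smul, ← sub_smul]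
        have e1 := hne (k+1)
        have e0 := hne k
        push_cast at e0 e1 ⊢
        have key : ((k:ℂ)+1+2*h)⁻¹ * (((k:ℂ)+1+1) * ((k:ℂ)+1+2*h)) - ((k:ℂ)+1) * ((k:ℂ)+2*h) * ((k:ℂ)+2*h)⁻¹ = 1 := by
          field_simp
          try ring
        rw [key, one_smul]
  -- J on all naturals
  have hJ' : ∀ k : ℕ, J (k:ℤ) = Dop ^ k := by
    intro k
    cases k with
    | zero => simpa using hJ0
    | succ j => exact hJpos (j+1) (by omega)
  have hJ'' : ∀ k : ℕ, J (-(k:ℤ)) = F ^ k := by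
    intro k
    cases k with
    | zero => simpa using hJ0
    | succ j => exact hJneg (j+1) (by omega)
  have cp1 := comm_pow_s11 lm1 Dop (-1) comm_lm1_D (by rw [E_mul_neg_one, E_neg_one_mul])
  have cp2 := comm_pow_s11 (l0 h) Dop (-Dop) (comm_l0_D h) (by rw [E_mul_neg, E_neg_mul])
  have cp3 := comm_pow_s11 (l1 h) Dop (-(Dop^2)) (comm_l1_D h)
    (by rw [E_mul_neg, E_neg_mul, E_pow_succ', E_pow_succ])
  have cp4 := comm_pow_s11 lm1 F (F^2) comm_lm1_F (by rw [E_pow_succ', E_pow_succ])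
  have cp5 := comm_pow_s11 (l0 h) F F comm_l0_F rfl
  have cp6 := comm_pow_s11 (l1 h) F 1 comm_l1_F (by rw [mul_one, one_mul])
  intro m
  rcases m with m | j
  · cases m with
    | zero =>
        refine ⟨?_, ?_, ?_⟩ <;>
          simp [hJ0, opComm, Int.ofNat_zero]
    | succ j =>
        have hm : (Int.ofNat (j+1)) = ((j+1 : ℕ) : ℤ) := rfl
        rw [hm]
        have e2 : ((j+1:ℕ):ℤ) + -1 = ((j:ℕ):ℤ) := by push_cast; ring
        have e3 : ((j+1:ℕ):ℤ) + 1 = ((j+2:ℕ):ℤ) := by push_cast; ring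
        refine ⟨?_, ?_, ?_⟩
        · rw [hJ' (j+1), e2, hJ' j, cp1 j, E_mul_neg_one, smul_neg, ← neg_smul]
          congr 1
          all_goals try push_cast
          all_goals try ring
        · rw [hJ' (j+1), cp2 j, E_mul_neg, E_pow_succ, smul_neg, ← neg_smul]
          congr 1
          all_goals try push_cast
          all_goals try ring
        · rw [hJ' (j+1), e3, hJ' (j+2), cp3 j, E_mul_neg, E_pow_add, smul_neg, ← neg_smul]
          congr 1
          all_goals try push_cast
          all_goals try ring
  · have hm : (Int.negSucc j) = -((j+1 : ℕ) : ℤ) := by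
      rw [Int.negSucc_eq]; push_cast; ring
    rw [hm]
    have e2 : -((j+1:ℕ):ℤ) + -1 = -((j+2:ℕ):ℤ) := by push_cast; ring
    have e3 : -((j+1:ℕ):ℤ) + 1 = -((j:ℕ):ℤ) := by push_cast; ring
    refine ⟨?_, ?_, ?_⟩
    · rw [hJ'' (j+1), e2, hJ'' (j+2), cp4 j, E_pow_add]
      congr 1
    · rw [hJ'' (j+1), cp5 j, E_pow_succ]
      congr 1
    · rw [hJ'' (j+1), e3, hJ'' j, cp6 j, E_mul_one]
      congr 1


end
end
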